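/- For g(x) = x − tanh(x) and T(x,y) = (g(y+x) + g(y−x))/2, one has 0 ≤ y·T(x,y) ≤ x²y² + y⁴ for all real x, y. -/

import Mathlib

/-- `g(x) = x − tanh(x)`. -/
noncomputable def gfun (x : ℝ) : ℝ := x - Real.tanh x

/-- `T(x,y) = (g(y+x) + g(y−x))/2`. -/
noncomputable def Tfun (x y : ℝ) : ℝ := (gfun (y + x) + gfun (y - x)) / 2

lemma tanh_hasDerivAt (u : ℝ) : HasDerivAt Real.tanh (1 - Real.tanh u ^ 2) u := by
  have h := (Real.hasDerivAt_sinh u).div (Real.hasDerivAt_cosh u) (Real.cosh_pos u).ne'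
  have heq : (Real.cosh u * Real.cosh u - Real.sinh u * Real.sinh u) / Real.cosh u ^ 2
      = 1 - Real.tanh u ^ 2 := by
    rw [Real.tanh_eq_sinh_div_cosh]
    have h1 : Real.cosh u ≠ 0 := (Real.cosh_pos u).ne'
    have h2 := Real.cosh_sq_sub_sinh_sq u
    field_simp
  rw [heq] at h
  exact h.congr_of_eventuallyEq (Filter.Eventually.of_forall fun v => Real.tanh_eq_sinh_div_cosh v)

lemma gfun_hasDerivAt (u : ℝ) : HasDerivAt gfun (Real.tanh u ^ 2) u := by
  have h := (hasDerivAt_id u).sub (tanh_hasDerivAt u)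
  exact h.congr_deriv (by ring)

lemma gfun_mono : Monotone gfun := by
  apply monotone_of_deriv_nonneg
  · exact fun u => (gfun_hasDerivAt u).differentiableAt
  · intro u
    rw [(gfun_hasDerivAt u).deriv]
    positivity

lemma tanh_le_self {u : ℝ} (hu : 0 ≤ u) : Real.tanh u ≤ u := by
  have h := gfun_mono hu
  simp [gfun, Real.tanh_zero] at h
  linarith

lemma tanh_nonneg {u : ℝ} (hu : 0 ≤ u) : 0 ≤ Real.tanh u := by
  have hs : Real.sinh 0 ≤ Real.sinh u := Real.sinh_le_sinh.mpr hu
  rw [Real.sinh_zero] at hs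
  rw [Real.tanh_eq_sinh_div_cosh]
  exact div_nonneg hs (Real.cosh_pos u).le

lemma tanh_sq_le (u : ℝ) : Real.tanh u ^ 2 ≤ u ^ 2 := by
  rcases le_total 0 u with hu | hu
  · nlinarith [tanh_le_self hu, tanh_nonneg hu]
  · have hu' : 0 ≤ -u := by linarith
    have h1 := tanh_le_self hu'
    have h2 := tanh_nonneg hu'
    rw [Real.tanh_neg] at h1 h2
    nlinarith

lemma T_hasDerivAt (x y : ℝ) : HasDerivAt (fun y => Tfun x y)
    ((Real.tanh (y + x) ^ 2 + Real.tanh (y - x) ^ 2) / 2) y := by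
  have h1 : HasDerivAt (fun y : ℝ => gfun (y + x)) (Real.tanh (y + x) ^ 2) y := by
    have := (gfun_hasDerivAt (y + x)).comp y ((hasDerivAt_id y).add_const x)
    simpa [Function.comp_def] using this
  have h2 : HasDerivAt (fun y : ℝ => gfun (y - x)) (Real.tanh (y - x) ^ 2) y := by
    have := (gfun_hasDerivAt (y - x)).comp y ((hasDerivAt_id y).sub_const x)
    simpa [Function.comp_def] using this
  simpa [Tfun] using (h1.add h2).div_const 2

lemma T_zero (x : ℝ) : Tfun x 0 = 0 := by
  simp [Tfun, gfun, zero_add, zero_sub, Real.tanh_neg]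

lemma T_mono (x : ℝ) : Monotone (fun y => Tfun x y) := by
  apply monotone_of_deriv_nonneg
  · exact fun y => (T_hasDerivAt x y).differentiableAt
  · intro y
    rw [(T_hasDerivAt x y).deriv]
    positivity

lemma F_hasDerivAt (x y : ℝ) : HasDerivAt (fun y => x ^ 2 * y + y ^ 3 - Tfun x y)
    (x ^ 2 + 3 * y ^ 2 - (Real.tanh (y + x) ^ 2 + Real.tanh (y - x) ^ 2) / 2) y := by
  have h1 : HasDerivAt (fun y : ℝ => x ^ 2 * y + y ^ 3) (x ^ 2 + 3 * y ^ 2) y := by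
    have := ((hasDerivAt_id y).const_mul (x ^ 2)).add (hasDerivAt_pow 3 y)
    simpa [Pi.add_def] using this
  exact h1.sub (T_hasDerivAt x y)

lemma F_mono (x : ℝ) : Monotone (fun y => x ^ 2 * y + y ^ 3 - Tfun x y) := by
  apply monotone_of_deriv_nonneg
  · exact fun y => (F_hasDerivAt x y).differentiableAt
  · intro y
    rw [(F_hasDerivAt x y).deriv]
    nlinarith [tanh_sq_le (y + x), tanh_sq_le (y - x)]

/-- `0 ≤ y·T(x,y) ≤ x²y² + y⁴` for all real `x, y`. -/
theorem stmt_7 (x y : ℝ) :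
    0 ≤ y * Tfun x y ∧ y * Tfun x y ≤ x ^ 2 * y ^ 2 + y ^ 4 := by
  rcases le_total 0 y with hy | hy
  · have hT : Tfun x 0 ≤ Tfun x y := T_mono x hy
    rw [T_zero] at hT
    have hF : x ^ 2 * 0 + 0 ^ 3 - Tfun x 0 ≤ x ^ 2 * y + y ^ 3 - Tfun x y := F_mono x hy
    rw [T_zero] at hF
    constructor
    · exact mul_nonneg hy hT
    · nlinarith
  · have hT : Tfun x y ≤ Tfun x 0 := T_mono x hy
    rw [T_zero] at hT
    have hF : x ^ 2 * y + y ^ 3 - Tfun x y ≤ x ^ 2 * 0 + 0 ^ 3 - Tfun x 0 := F_mono x hy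
    rw [T_zero] at hF
    constructor
    · nlinarith
    · nlinarith
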